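/- Let A be a Stone topological L-algebra, with its underlying compact Hausdorff space carrying its (unique) compatible uniform structure. Then A is residually finite (i.e., profinite) if and only if the family of self-maps belonging to the translation monoid M(A) is equicontinuous. -/

import Mathlib

open FirstOrder Language Structure

/-- An elementary translation of an `L`-algebra `A`. -/
def IsElemTranslation (L : FirstOrder.Language) {A : Type*} [L.Structure A]
    (g : Function.End A) : Prop :=
  ∃ (n : ℕ) (f : L.Functions n) (i : Fin n) (v : Fin n → A),
    g = fun a => funMap f (Function.update v i a)

/-- The translation monoid `M(A)`. -/
def translationMonoid (L : FirstOrder.Language) (A : Type*) [L.Structure A] :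
    Submonoid (Function.End A) :=
  Submonoid.closure {g | IsElemTranslation L g}

/-- The syntactic congruence of `K ⊆ A`. -/
def syntCong (L : FirstOrder.Language) {A : Type*} [L.Structure A] (K : Set A)
    (a b : A) : Prop :=
  ∀ g ∈ translationMonoid L A, (g a ∈ K ↔ g b ∈ K)

/-- Residual finiteness of a topological `L`-algebra. -/
def ResiduallyFinite (L : FirstOrder.Language) (A : Type*) [TopologicalSpace A]
    [L.Structure A] : Prop :=
  ∀ a b : A, a ≠ b →
    ∃ (F : Type) (_ : Finite F) (iT : TopologicalSpace F) (iS : L.Structure F),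
      letI := iT; letI := iS;
      DiscreteTopology F ∧ ∃ φ : A →[L] F, Continuous (φ : A → F) ∧ φ a ≠ φ b

open Filter Topology Uniformity

section Aux

variable {L : FirstOrder.Language} {A : Type*} [L.Structure A]

lemma syntCong_refl (K : Set A) (a : A) : syntCong L K a a := fun _ _ => Iff.rfl

lemma syntCong_symm {K : Set A} {a b : A} (h : syntCong L K a b) : syntCong L K b a :=
  fun g hg => (h g hg).symm

lemma syntCong_trans {K : Set A} {a b c : A} (hab : syntCong L K a b)
    (hbc : syntCong L K b c) : syntCong L K a c := fun g hg => (hab g hg).trans (hbc g hg)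

lemma elemTranslation_mem {n : ℕ} (f : L.Functions n) (i : Fin n) (v : Fin n → A) :
    (fun a => funMap f (Function.update v i a) : Function.End A) ∈ translationMonoid L A :=
  Submonoid.subset_closure ⟨n, f, i, v, rfl⟩

lemma syntCong_update {K : Set A} {x y : A} (h : syntCong L K x y) {n : ℕ}
    (f : L.Functions n) (i : Fin n) (v : Fin n → A) :
    syntCong L K (funMap f (Function.update v i x)) (funMap f (Function.update v i y)) := by
  intro g hg
  have hm := mul_mem hg (elemTranslation_mem f i v)
  exact h _ hm

lemma syntCong_funMap {K : Set A} {n : ℕ} (f : L.Functions n) {v w : Fin n → A}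
    (h : ∀ i, syntCong L K (v i) (w i)) :
    syntCong L K (funMap f v) (funMap f w) := by
  classical
  have H : ∀ k : ℕ, syntCong L K (funMap f v)
      (funMap f fun i => if (i : ℕ) < k then w i else v i) := by
    intro k
    induction k with
    | zero => simpa using syntCong_refl K (funMap f v)
    | succ k ih =>
      by_cases hk : k < n
      · set u : Fin n → A := fun i => if (i : ℕ) < k then w i else v i with hu
        have h2 : u = Function.update u ⟨k, hk⟩ (v ⟨k, hk⟩) := by
          funext i
          rcases eq_or_ne i ⟨k, hk⟩ with rfl | hi
          · simp [hu]
          · rw [Function.update_of_ne hi]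
        have h1 : (fun i : Fin n => if (i : ℕ) < k + 1 then w i else v i) =
            Function.update u ⟨k, hk⟩ (w ⟨k, hk⟩) := by
          funext i
          rcases eq_or_ne i ⟨k, hk⟩ with rfl | hi
          · simp
          · have hik : (i : ℕ) ≠ k := fun hik => hi (Fin.ext hik)
            rw [Function.update_of_ne hi, hu]
            simp only [Nat.lt_succ_iff_lt_or_eq, hik, or_false]
        have step := syntCong_update (h ⟨k, hk⟩) f ⟨k, hk⟩ u
        rw [← h2, ← h1] at step
        exact syntCong_trans ih step
      · have : (fun i : Fin n => if (i : ℕ) < k + 1 then w i else v i) =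
            fun i : Fin n => if (i : ℕ) < k then w i else v i := by
          funext i
          have h1 : (i : ℕ) < k := lt_of_lt_of_le i.is_lt (not_lt.1 hk)
          simp [h1, Nat.lt_succ_of_lt h1]
        rw [this]
        exact ih
  have := H n
  simpa [Fin.is_lt] using this

lemma hom_eq_of_mem_translationMonoid {F : Type*} [L.Structure F] (φ : A →[L] F)
    {g : Function.End A} (hg : g ∈ translationMonoid L A) :
    ∀ x y : A, φ x = φ y → φ (g x) = φ (g y) := by
  induction hg using Submonoid.closure_induction with
  | mem t ht =>
    obtain ⟨n, f, i, v, rfl⟩ := ht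
    intro x y hxy
    show φ (funMap f (Function.update v i x)) = φ (funMap f (Function.update v i y))
    rw [φ.map_fun, φ.map_fun, Function.comp_update, Function.comp_update, hxy]
  | one => exact fun x y hxy => hxy
  | mul s t hs ht ihs iht =>
    intro x y hxy
    exact ihs (t x) (t y) (iht x y hxy)

end Aux

/-- A Stone topological `L`-algebra is profinite iff its translation monoid is
equicontinuous (w.r.t. the unique compatible uniformity on the compact Hausdorff
space `A`). -/
theorem residuallyFinite_iff_equicontinuous (L : FirstOrder.Language) {A : Type*}
    [TopologicalSpace A] [L.Structure A]
    [CompactSpace A] [T2Space A] [TotallyDisconnectedSpace A]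
    (hA : ∀ (n : ℕ) (f : L.Functions n), Continuous fun v : Fin n → A => funMap f v) :
    ResiduallyFinite L A ↔
      (letI : UniformSpace A := uniformSpaceOfCompactR1
       Equicontinuous fun g : translationMonoid L A => (g.1 : A → A)) := by
  classical
  letI 𝒰 : UniformSpace A := uniformSpaceOfCompactR1
  show ResiduallyFinite L A ↔ Equicontinuous fun g : translationMonoid L A => (g.1 : A → A)
  have huni : 𝓤 A = ⨆ x : A, 𝓝 (x, x) := by
    show 𝓝ˢ (Set.diagonal A) = _
    exact nhdsSet_diagonal A
  constructor
  · -- residually finite → equicontinuous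
    intro hRF
    have key : ∀ p : A × A, p.1 ≠ p.2 → ∃ V : Set (A × A), IsClopen V ∧
        Set.diagonal A ⊆ V ∧ p ∉ V ∧
        ∀ g ∈ translationMonoid L A, ∀ q ∈ V, ((g q.1 : A), g q.2) ∈ V := by
      intro p hp
      obtain ⟨F, hF, iT, iS, hdisc, φ, hφc, hφp⟩ := hRF p.1 p.2 hp
      refine ⟨{q : A × A | φ q.1 = φ q.2}, ?_, ?_, hφp, ?_⟩
      · have hc : Continuous fun q : A × A => ((φ q.1 : F), (φ q.2 : F)) :=
          (hφc.comp continuous_fst).prodMk (hφc.comp continuous_snd)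
        have : {q : A × A | φ q.1 = φ q.2} =
            (fun q : A × A => ((φ q.1 : F), (φ q.2 : F))) ⁻¹' Set.diagonal F := rfl
        rw [this]
        haveI : DiscreteTopology (F × F) := inferInstance
        exact ⟨IsClosed.preimage hc (isClosed_discrete _), IsOpen.preimage hc (isOpen_discrete _)⟩
      · rintro ⟨x, y⟩ (rfl : x = y); rfl
      · intro g hg q hq
        exact hom_eq_of_mem_translationMonoid φ hg q.1 q.2 hq
    refine UniformEquicontinuous.equicontinuous ?_
    intro U hU
    rw [huni, Filter.mem_iSup] at hU
    have hU' : U ∈ 𝓝ˢ (Set.diagonal A) := by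
      rw [nhdsSet_diagonal]; exact Filter.mem_iSup.2 hU
    obtain ⟨W, hWo, hdW, hWU⟩ := mem_nhdsSet_iff_exists.1 hU'
    -- choose invariant clopen entourages avoiding each point of Wᶜ
    have hWc : IsCompact Wᶜ := hWo.isClosed_compl.isCompact
    choose V hVclopen hVdiag hVnot hVinv using
      fun p : ↥(Wᶜ) => key p.1 (fun h => p.2 (hdW h))
    have hcover : Wᶜ ⊆ ⋃ p : ↥(Wᶜ), (V p)ᶜ := fun x hx =>
      Set.mem_iUnion.2 ⟨⟨x, hx⟩, hVnot ⟨x, hx⟩⟩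
    obtain ⟨t, ht⟩ := hWc.elim_finite_subcover (fun p : ↥(Wᶜ) => (V p)ᶜ)
      (fun p => (hVclopen p).1.isOpen_compl) hcover
    set V₀ : Set (A × A) := ⋂ p ∈ t, V p with hV₀
    have hV₀diag : Set.diagonal A ⊆ V₀ := fun q hq =>
      Set.mem_iInter₂.2 fun p _ => hVdiag p hq
    have hV₀open : IsOpen V₀ := isOpen_biInter_finset fun p _ => (hVclopen p).2
    have hV₀W : V₀ ⊆ W := by
      intro q hq
      by_contra hqW
      obtain ⟨p, hpt, hp⟩ := Set.mem_iUnion₂.1 (ht hqW)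
      exact hp (Set.mem_iInter₂.1 hq p hpt)
    have hV₀mem : V₀ ∈ 𝓤 A := by
      rw [huni, Filter.mem_iSup]
      exact fun x => hV₀open.mem_nhds (hV₀diag rfl)
    have hV₀inv : ∀ g ∈ translationMonoid L A, ∀ q ∈ V₀, ((g q.1 : A), g q.2) ∈ V₀ := by
      intro g hg q hq
      exact Set.mem_iInter₂.2 fun p hpt => hVinv p g hg q (Set.mem_iInter₂.1 hq p hpt)
    refine Filter.mem_of_superset hV₀mem ?_
    intro q hq g
    exact hWU (hV₀W (hV₀inv g.1 g.2 q hq))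
  · -- equicontinuous → residually finite
    intro hEq a b hab
    obtain ⟨K, hK, haK, hbK⟩ := exists_isClopen_of_totally_separated hab
    set W : Set (A × A) := (K ×ˢ K) ∪ (Kᶜ ×ˢ Kᶜ) with hW
    have hWmem : W ∈ 𝓤 A := by
      rw [huni, Filter.mem_iSup]
      intro x
      refine IsOpen.mem_nhds ((hK.2.prod hK.2).union (hK.compl.2.prod hK.compl.2)) ?_
      by_cases hx : x ∈ K
      · exact Or.inl ⟨hx, hx⟩
      · exact Or.inr ⟨hx, hx⟩
    have hUE := CompactSpace.uniformEquicontinuous_of_equicontinuous hEq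
    have hV := hUE W hWmem
    rw [Filter.eventually_iff] at hV
    set V : Set (A × A) := {q : A × A | ∀ g : translationMonoid L A, ((g.1 q.1 : A), g.1 q.2) ∈ W}
      with hVdef
    have hVmem : V ∈ 𝓤 A := hV
    -- V-related points are syntactically congruent
    have hVsub : ∀ q : A × A, q ∈ V → syntCong L K q.1 q.2 := by
      intro q hq g hg
      have := hq ⟨g, hg⟩
      rw [hW] at this
      rcases this with h | h
      · exact iff_of_true h.1 h.2
      · exact iff_of_false h.1 h.2
    -- the syntactic congruence as a setoid
    set s : Setoid A := ⟨fun x y => syntCong L K x y,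
      ⟨fun x => syntCong_refl K x, syntCong_symm, syntCong_trans⟩⟩ with hs
    letI : Setoid A := s
    -- classes are open
    have hclass : ∀ x : A, IsOpen {y : A | syntCong L K x y} := by
      intro x
      rw [isOpen_iff_mem_nhds]
      intro y hy
      refine Filter.mem_of_superset (UniformSpace.ball_mem_nhds y hVmem) ?_
      intro z hz
      exact syntCong_trans hy (hVsub (y, z) hz)
    letI iT : TopologicalSpace (Quotient s) := instTopologicalSpaceQuotient
    have hopen : ∀ c : Quotient s, IsOpen {c} := by
      intro c
      induction c using Quotient.inductionOn with
      | h x =>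
        have : Quotient.mk s ⁻¹' {Quotient.mk s x} = {y : A | syntCong L K x y} := by
          ext y
          simp only [Set.mem_preimage, Set.mem_singleton_iff, Set.mem_setOf_eq]
          constructor
          · intro h; exact syntCong_symm (Quotient.exact h)
          · intro h; exact Quotient.sound (syntCong_symm h)
        show IsOpen {Quotient.mk s x}
        have hq : Topology.IsQuotientMap (Quotient.mk s) := isQuotientMap_quot_mk
        rw [← hq.isOpen_preimage, this]
        exact hclass x
    haveI hdisc : DiscreteTopology (Quotient s) := discreteTopology_iff_isOpen_singleton.2 hopen
    haveI : CompactSpace (Quotient s) := Quotient.compactSpace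
    haveI hfin : Finite (Quotient s) := finite_of_compact_of_discrete
    -- structure on the quotient
    letI iS : L.Structure (Quotient s) :=
      { funMap := fun {n} f c => Quotient.mk s (funMap f fun i => (c i).out)
        RelMap := fun {n} r c => True }
    have hmapfun : ∀ (n : ℕ) (f : L.Functions n) (v : Fin n → A),
        Quotient.mk s (funMap f v) = funMap f fun i => Quotient.mk s (v i) := by
      intro n f v
      show _ = Quotient.mk s (funMap f fun i => (Quotient.mk s (v i)).out)
      refine Quotient.sound ?_
      refine syntCong_funMap f fun i => ?_
      exact syntCong_symm (Quotient.mk_out (v i))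
    -- transfer to a `Type 0` copy
    obtain ⟨m, ⟨e⟩⟩ := Finite.exists_equiv_fin (Quotient s)
    letI iT' : TopologicalSpace (Fin m) := ⊥
    haveI hdisc' : DiscreteTopology (Fin m) := ⟨rfl⟩
    letI iS' : L.Structure (Fin m) :=
      { funMap := fun {n} f c => e (funMap f fun i => e.symm (c i))
        RelMap := fun {n} r c => True }
    have hmapfun' : ∀ (n : ℕ) (f : L.Functions n) (v : Fin n → A),
        e (Quotient.mk s (funMap f v)) = funMap f fun i => e (Quotient.mk s (v i)) := by
      intro n f v
      show _ = e (funMap f fun i => e.symm (e (Quotient.mk s (v i))))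
      simp only [Equiv.symm_apply_apply]
      rw [hmapfun n f v]
    refine ⟨Fin m, Finite.of_fintype _, iT', iS', ?_⟩
    refine ⟨hdisc', ?_⟩
    refine ⟨⟨fun x => e (Quotient.mk s x), fun {n} f v => hmapfun' n f v,
      fun {n} r v _ => trivial⟩, ?_, ?_⟩
    · show Continuous fun x : A => e (Quotient.mk s x)
      exact Continuous.comp (continuous_of_discreteTopology (α := Quotient s) (f := ⇑e))
        continuous_quotient_mk'
    · intro h
      have hR : syntCong L K a b := Quotient.exact (e.injective h)
      have := hR 1 (one_mem _)
      exact hbK (this.1 haK)
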